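/- Combinatorial resolution for toric hypersurfaces: given γ ∈ ℤⁿ defining a linear function λ on ℤⁿ by λ(eᵢ) = γᵢ, define for each regular cone σ (given by a ℤ-basis of the lattice) d_σ = min(Σ_{λ(e)>0, e∈σ} λ(e), Σ_{λ(e)<0, e∈σ} (−λ(e))), and d(λ,Σ) = max over maximal cones σ ∈ Σ of d_σ. Then there exists a finite sequence of star-subdivisions Σ = Σ₀, Σ₁, …, Σ_t, each at the barycentre of a cone Δ with d_Δ = d(λ, Σ_j) minimal among its faces, such that d(λ, Σ_t) = 0. -/

import Mathlib

/-- `d_σ` for a cone `σ` (given by its finite set of vertices) and a linear functional `λ`: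
`min(Σ_{λ(e)>0, e∈σ} λ(e), Σ_{λ(e)<0, e∈σ} (−λ(e)))`. -/
def coneD {n : ℕ} (l : (Fin n → ℤ) →ₗ[ℤ] ℤ) (σ : Finset (Fin n → ℤ)) : ℤ :=
  min (∑ v ∈ σ.filter (fun v => 0 < l v), l v)
      (∑ v ∈ σ.filter (fun v => l v < 0), -l v)

/-- A regular cone: its vertices extend to a ℤ-basis of the lattice `ℤⁿ`. -/
def IsRegularCone {n : ℕ} (σ : Finset (Fin n → ℤ)) : Prop :=
  ∃ b : Module.Basis (Fin n) ℤ (Fin n → ℤ), (σ : Set (Fin n → ℤ)) ⊆ Set.range ⇑b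

/-- The barycentre `e_Δ` of a cone `Δ`: the sum of its vertices. -/
def barycentre {n : ℕ} (Δ : Finset (Fin n → ℤ)) : Fin n → ℤ := ∑ v ∈ Δ, v

/-- The star-subdivision of a (simplicial, regular) fan at the barycentre of the cone `Δ`:
cones not containing `Δ` are kept, and each cone `τ ∪ Δ` containing `Δ` is replaced by the
cones `insert e_Δ τ` with `Δ ⊄ τ`. Fans are recorded by the vertex sets of their cones. -/
def starSubdivision {n : ℕ} (S : Set (Finset (Fin n → ℤ))) (Δ : Finset (Fin n → ℤ)) :
    Set (Finset (Fin n → ℤ)) :=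
  {σ ∈ S | ¬ Δ ⊆ σ} ∪
  {σ | ∃ τ : Finset (Fin n → ℤ), σ = insert (barycentre Δ) τ ∧ ¬ Δ ⊆ τ ∧ τ ∪ Δ ∈ S}

namespace Reso
variable {n : ℕ} (l : (Fin n → ℤ) →ₗ[ℤ] ℤ)

noncomputable def P (σ : Finset (Fin n → ℤ)) : ℤ := ∑ v ∈ σ.filter (fun v => 0 < l v), l v
noncomputable def N (σ : Finset (Fin n → ℤ)) : ℤ := ∑ v ∈ σ.filter (fun v => l v < 0), -l v
noncomputable def Om (σ : Finset (Fin n → ℤ)) : ℤ := max (P l σ) (N l σ)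

lemma coneD_eq (σ : Finset (Fin n → ℤ)) : coneD l σ = min (P l σ) (N l σ) := rfl

lemma P_nonneg (σ : Finset (Fin n → ℤ)) : 0 ≤ P l σ :=
  Finset.sum_nonneg fun v hv => le_of_lt (Finset.mem_filter.mp hv).2

lemma N_nonneg (σ : Finset (Fin n → ℤ)) : 0 ≤ N l σ :=
  Finset.sum_nonneg fun v hv => by have := (Finset.mem_filter.mp hv).2; omega

lemma coneD_nonneg (σ : Finset (Fin n → ℤ)) : 0 ≤ coneD l σ :=
  le_min (P_nonneg l σ) (N_nonneg l σ)

lemma P_mono {σ τ : Finset (Fin n → ℤ)} (h : σ ⊆ τ) : P l σ ≤ P l τ :=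
  Finset.sum_le_sum_of_subset_of_nonneg (Finset.filter_subset_filter _ h)
    (fun v hv _ => le_of_lt (Finset.mem_filter.mp hv).2)

lemma N_mono {σ τ : Finset (Fin n → ℤ)} (h : σ ⊆ τ) : N l σ ≤ N l τ :=
  Finset.sum_le_sum_of_subset_of_nonneg (Finset.filter_subset_filter _ h)
    (fun v hv _ => by have := (Finset.mem_filter.mp hv).2; omega)

lemma coneD_mono {σ τ : Finset (Fin n → ℤ)} (h : σ ⊆ τ) : coneD l σ ≤ coneD l τ :=
  min_le_min (P_mono l h) (N_mono l h)

lemma P_insert {v : Fin n → ℤ} {σ : Finset (Fin n → ℤ)} (hv : v ∉ σ) :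
    P l (insert v σ) = P l σ + (if 0 < l v then l v else 0) := by
  classical
  unfold P
  rw [Finset.filter_insert]
  by_cases h : 0 < l v
  · rw [if_pos h, Finset.sum_insert (fun hc => hv (Finset.mem_filter.mp hc).1), if_pos h]
    ring
  · rw [if_neg h, if_neg h]; ring

lemma N_insert {v : Fin n → ℤ} {σ : Finset (Fin n → ℤ)} (hv : v ∉ σ) :
    N l (insert v σ) = N l σ + (if l v < 0 then -l v else 0) := by
  classical
  unfold N
  rw [Finset.filter_insert]
  by_cases h : l v < 0
  · rw [if_pos h, Finset.sum_insert (fun hc => hv (Finset.mem_filter.mp hc).1), if_pos h]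
    ring
  · rw [if_neg h, if_neg h]; ring

lemma P_union_sdiff (τ Δ : Finset (Fin n → ℤ)) : P l (τ ∪ Δ) = P l τ + P l (Δ \ τ) := by
  classical
  unfold P
  rw [show τ ∪ Δ = τ ∪ (Δ \ τ) by simp, Finset.filter_union,
    Finset.sum_union]
  exact Finset.disjoint_filter_filter (Finset.disjoint_sdiff)

lemma N_union_sdiff (τ Δ : Finset (Fin n → ℤ)) : N l (τ ∪ Δ) = N l τ + N l (Δ \ τ) := by
  classical
  unfold N
  rw [show τ ∪ Δ = τ ∪ (Δ \ τ) by simp, Finset.filter_union,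
    Finset.sum_union]
  exact Finset.disjoint_filter_filter (Finset.disjoint_sdiff)

lemma P_erase {v : Fin n → ℤ} {Δ : Finset (Fin n → ℤ)} (hv : v ∈ Δ) :
    P l (Δ.erase v) = P l Δ - (if 0 < l v then l v else 0) := by
  classical
  have h : Δ = insert v (Δ.erase v) := (Finset.insert_erase hv).symm
  have h2 := P_insert l (Finset.notMem_erase v Δ)
  rw [← h] at h2
  omega

lemma N_erase {v : Fin n → ℤ} {Δ : Finset (Fin n → ℤ)} (hv : v ∈ Δ) :
    N l (Δ.erase v) = N l Δ - (if l v < 0 then -l v else 0) := by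
  classical
  have h : Δ = insert v (Δ.erase v) := (Finset.insert_erase hv).symm
  have h2 := N_insert l (Finset.notMem_erase v Δ)
  rw [← h] at h2
  omega

lemma l_barycentre (Δ : Finset (Fin n → ℤ)) : l (barycentre Δ) = P l Δ - N l Δ := by
  classical
  unfold barycentre
  rw [map_sum]
  rw [← Finset.sum_filter_add_sum_filter_not Δ (fun v => 0 < l v)]
  have h2 : ∑ v ∈ Δ.filter (fun v => ¬ 0 < l v), l v
      = ∑ v ∈ (Δ.filter (fun v => ¬ 0 < l v)).filter (fun v => l v < 0), l v :=
    (Finset.sum_filter_of_ne (fun v hv hne => by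
      have := (Finset.mem_filter.mp hv).2; omega)).symm
  have h3 : (Δ.filter (fun v => ¬ 0 < l v)).filter (fun v => l v < 0)
      = Δ.filter (fun v => l v < 0) := by
    rw [Finset.filter_filter]
    apply Finset.filter_congr
    intro v _; constructor <;> (intro h; first | exact h.2 | exact ⟨by omega, h⟩)
  rw [h2, h3]
  unfold P N
  have h4 : ∑ v ∈ Δ.filter (fun v => l v < 0), -l v
      = -∑ v ∈ Δ.filter (fun v => l v < 0), l v := Finset.sum_neg_distrib _
  rw [h4]; ring



lemma le_P {σ : Finset (Fin n → ℤ)} {v : Fin n → ℤ} (hv : v ∈ σ) (h : 0 < l v) :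
    l v ≤ P l σ := by
  unfold P
  exact Finset.single_le_sum (fun i hi => le_of_lt (Finset.mem_filter.mp hi).2)
    (Finset.mem_filter.mpr ⟨hv, h⟩)

lemma le_N {σ : Finset (Fin n → ℤ)} {v : Fin n → ℤ} (hv : v ∈ σ) (h : l v < 0) :
    -l v ≤ N l σ := by
  unfold N
  exact Finset.single_le_sum (f := fun v => -l v)
    (fun i hi => by have := (Finset.mem_filter.mp hi).2; show 0 ≤ -l i; omega)
    (Finset.mem_filter.mpr ⟨hv, h⟩)

lemma P_eq_zero {σ : Finset (Fin n → ℤ)} (h : ∀ v ∈ σ, l v ≤ 0) : P l σ = 0 := by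
  unfold P
  rw [Finset.filter_false_of_mem (fun v hv => not_lt.mpr (h v hv))]
  simp

lemma N_eq_zero {σ : Finset (Fin n → ℤ)} (h : ∀ v ∈ σ, 0 ≤ l v) : N l σ = 0 := by
  unfold N
  rw [Finset.filter_false_of_mem (fun v hv => not_lt.mpr (h v hv))]
  simp

lemma key (Δ τ : Finset (Fin n → ℤ)) (hΔτ : ¬ Δ ⊆ τ)
    (hadm : coneD l (τ ∪ Δ) ≤ coneD l Δ)
    (hmin : ∀ Δ₁ ⊂ Δ, coneD l Δ₁ < coneD l Δ) :
    coneD l (insert (barycentre Δ) τ) < coneD l (τ ∪ Δ) ∨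
    (coneD l (insert (barycentre Δ) τ) = coneD l (τ ∪ Δ) ∧
     Om l (insert (barycentre Δ) τ) < Om l (τ ∪ Δ)) := by
  classical
  have hD : coneD l Δ = min (P l Δ) (N l Δ) := coneD_eq l Δ
  have hposv : ∀ v ∈ Δ, 0 < l v → P l Δ - l v < coneD l Δ := by
    intro v hv hlv
    have h := hmin (Δ.erase v) (Finset.erase_ssubset hv)
    rw [coneD_eq, P_erase l hv, N_erase l hv, if_pos hlv, if_neg (by omega)] at h
    omega
  have hnegv : ∀ v ∈ Δ, l v < 0 → N l Δ + l v < coneD l Δ := by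
    intro v hv hlv
    have h := hmin (Δ.erase v) (Finset.erase_ssubset hv)
    rw [coneD_eq, P_erase l hv, N_erase l hv, if_neg (by omega), if_pos hlv] at h
    omega
  have hzero : ∀ v ∈ Δ, l v ≠ 0 := by
    intro v hv hl0
    have h := hmin (Δ.erase v) (Finset.erase_ssubset hv)
    rw [coneD_eq, P_erase l hv, N_erase l hv, if_neg (by omega), if_neg (by omega)] at h
    omega
  have ha'pos : 0 < P l (Δ \ τ) → P l Δ - coneD l Δ < P l (Δ \ τ) := by
    intro h
    have hex : ∃ v ∈ Δ \ τ, 0 < l v := by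
      by_contra hc
      push_neg at hc
      have := P_eq_zero l hc
      omega
    obtain ⟨v, hvmem, hvpos⟩ := hex
    have h1 := hposv v (Finset.mem_sdiff.mp hvmem).1 hvpos
    have h2 := le_P l hvmem hvpos
    omega
  have hb'pos : 0 < N l (Δ \ τ) → N l Δ - coneD l Δ < N l (Δ \ τ) := by
    intro h
    have hex : ∃ v ∈ Δ \ τ, l v < 0 := by
      by_contra hc
      push_neg at hc
      have := N_eq_zero l hc
      omega
    obtain ⟨v, hvmem, hvneg⟩ := hex
    have h1 := hnegv v (Finset.mem_sdiff.mp hvmem).1 hvneg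
    have h2 := le_N l hvmem hvneg
    omega
  have hor : 0 < P l (Δ \ τ) ∨ 0 < N l (Δ \ τ) := by
    obtain ⟨v, hvΔ, hvτ⟩ := Finset.not_subset.mp hΔτ
    have hvmem : v ∈ Δ \ τ := Finset.mem_sdiff.mpr ⟨hvΔ, hvτ⟩
    rcases lt_trichotomy (l v) 0 with h | h | h
    · right; have := le_N l hvmem h; omega
    · exact absurd h (hzero v hvΔ)
    · left; have := le_P l hvmem h; omega
  have ha'0 : P l (Δ \ τ) = 0 → P l Δ ≤ P l τ := by
    intro h
    have hsub : Δ.filter (fun v => 0 < l v) ⊆ τ.filter (fun v => 0 < l v) := by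
      intro v hv
      obtain ⟨hvΔ, hvpos⟩ := Finset.mem_filter.mp hv
      refine Finset.mem_filter.mpr ⟨?_, hvpos⟩
      by_contra hvτ
      have := le_P l (Finset.mem_sdiff.mpr ⟨hvΔ, hvτ⟩) hvpos
      omega
    exact Finset.sum_le_sum_of_subset_of_nonneg hsub
      (fun i hi _ => le_of_lt (Finset.mem_filter.mp hi).2)
  have hb'0 : N l (Δ \ τ) = 0 → N l Δ ≤ N l τ := by
    intro h
    have hsub : Δ.filter (fun v => l v < 0) ⊆ τ.filter (fun v => l v < 0) := by
      intro v hv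
      obtain ⟨hvΔ, hvneg⟩ := Finset.mem_filter.mp hv
      refine Finset.mem_filter.mpr ⟨?_, hvneg⟩
      by_contra hvτ
      have := le_N l (Finset.mem_sdiff.mpr ⟨hvΔ, hvτ⟩) hvneg
      omega
    exact Finset.sum_le_sum_of_subset_of_nonneg hsub
      (fun i hi _ => by have := (Finset.mem_filter.mp hi).2; omega)
  have hxy : P l (insert (barycentre Δ) τ) ≤ P l τ + (P l Δ - coneD l Δ) ∧
      N l (insert (barycentre Δ) τ) ≤ N l τ + (N l Δ - coneD l Δ) := by
    by_cases he : barycentre Δ ∈ τ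
    · rw [Finset.insert_eq_self.mpr he]
      constructor <;> omega
    · have hxe := P_insert l he
      have hye := N_insert l he
      rw [l_barycentre] at hxe hye
      split_ifs at hxe hye <;> omega
  have hPU := P_union_sdiff l τ Δ
  have hNU := N_union_sdiff l τ Δ
  have hddσ : coneD l (τ ∪ Δ) = coneD l Δ :=
    le_antisymm hadm (coneD_mono l Finset.subset_union_right)
  have hCσ : coneD l (τ ∪ Δ) = min (P l (τ ∪ Δ)) (N l (τ ∪ Δ)) := coneD_eq l (τ ∪ Δ)
  have h0p := P_nonneg l τ
  have h0n := N_nonneg l τ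
  have h0a' := P_nonneg l (Δ \ τ)
  have h0b' := N_nonneg l (Δ \ τ)
  have h0x := P_nonneg l (insert (barycentre Δ) τ)
  have h0y := N_nonneg l (insert (barycentre Δ) τ)
  rw [coneD_eq l (insert (barycentre Δ) τ)]
  unfold Om
  omega



open Classical in
noncomputable def starF (F : Finset (Finset (Fin n → ℤ))) (Δ : Finset (Fin n → ℤ)) :
    Finset (Finset (Fin n → ℤ)) :=
  F.filter (fun σ => ¬ Δ ⊆ σ) ∪
    (F.filter (fun τ => ¬ Δ ⊆ τ ∧ τ ∪ Δ ∈ F)).image (insert (barycentre Δ))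

lemma mem_starF {F : Finset (Finset (Fin n → ℤ))} {Δ σ : Finset (Fin n → ℤ)} :
    σ ∈ starF F Δ ↔ (σ ∈ F ∧ ¬ Δ ⊆ σ) ∨
      ∃ τ, τ ∈ F ∧ ¬ Δ ⊆ τ ∧ τ ∪ Δ ∈ F ∧ σ = insert (barycentre Δ) τ := by
  classical
  simp only [starF, Finset.mem_union, Finset.mem_filter, Finset.mem_image]
  constructor
  · rintro (⟨h1, h2⟩ | ⟨τ, ⟨hτF, hτ1, hτ2⟩, rfl⟩)
    · exact Or.inl ⟨h1, h2⟩
    · exact Or.inr ⟨τ, hτF, hτ1, hτ2, rfl⟩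
  · rintro (⟨h1, h2⟩ | ⟨τ, hτF, hτ1, hτ2, rfl⟩)
    · exact Or.inl ⟨h1, h2⟩
    · exact Or.inr ⟨τ, ⟨hτF, hτ1, hτ2⟩, rfl⟩

lemma coe_starF {F : Finset (Finset (Fin n → ℤ))} {Δ : Finset (Fin n → ℤ)}
    (hcl : ∀ σ ∈ F, ∀ ρ ⊆ σ, ρ ∈ F) :
    (↑(starF F Δ) : Set (Finset (Fin n → ℤ))) = starSubdivision (↑F) Δ := by
  ext σ
  rw [Finset.mem_coe, mem_starF]
  simp only [starSubdivision, Set.mem_union, Set.mem_setOf_eq, Set.mem_sep_iff,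
    Finset.mem_coe]
  constructor
  · rintro (⟨h1, h2⟩ | ⟨τ, hτF, hτ1, hτ2, rfl⟩)
    · exact Or.inl ⟨h1, h2⟩
    · exact Or.inr ⟨τ, rfl, hτ1, hτ2⟩
  · rintro (⟨h1, h2⟩ | ⟨τ, rfl, hτ1, hτ2⟩)
    · exact Or.inl ⟨h1, h2⟩
    · exact Or.inr ⟨τ, hcl _ hτ2 τ Finset.subset_union_left, hτ1, hτ2, rfl⟩

lemma starF_closed {F : Finset (Finset (Fin n → ℤ))} {Δ : Finset (Fin n → ℤ)}
    (hcl : ∀ σ ∈ F, ∀ ρ ⊆ σ, ρ ∈ F) :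
    ∀ σ ∈ starF F Δ, ∀ ρ ⊆ σ, ρ ∈ starF F Δ := by
  classical
  intro σ hσ ρ hρ
  rw [mem_starF] at hσ ⊢
  rcases hσ with ⟨h1, h2⟩ | ⟨τ, hτF, hτ1, hτ2, rfl⟩
  · exact Or.inl ⟨hcl σ h1 ρ hρ, fun hc => h2 (hc.trans hρ)⟩
  · by_cases he : barycentre Δ ∈ ρ
    · right
      refine ⟨ρ.erase (barycentre Δ), ?_, ?_, ?_, (Finset.insert_erase he).symm⟩
      · have hsub : ρ.erase (barycentre Δ) ⊆ τ := by
          intro x hx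
          obtain ⟨hx1, hx2⟩ := Finset.mem_erase.mp hx
          rcases Finset.mem_insert.mp (hρ hx2) with h | h
          · exact absurd h hx1
          · exact h
        exact hcl τ hτF _ hsub
      · intro hc
        apply hτ1
        refine hc.trans ?_
        intro x hx
        obtain ⟨hx1, hx2⟩ := Finset.mem_erase.mp hx
        rcases Finset.mem_insert.mp (hρ hx2) with h | h
        · exact absurd h hx1
        · exact h
      · apply hcl (τ ∪ Δ) hτ2
        apply Finset.union_subset_union_left
        intro x hx
        obtain ⟨hx1, hx2⟩ := Finset.mem_erase.mp hx
        rcases Finset.mem_insert.mp (hρ hx2) with h | h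
        · exact absurd h hx1
        · exact h
    · left
      have hsub : ρ ⊆ τ := by
        intro x hx
        rcases Finset.mem_insert.mp (hρ hx) with h | h
        · exact absurd (h ▸ hx) he
        · exact h
      exact ⟨hcl τ hτF ρ hsub,
        fun hc => hτ1 (hc.trans hsub)⟩

lemma starF_step {F : Finset (Finset (Fin n → ℤ))} {Δ σ' : Finset (Fin n → ℤ)}
    (hadm : ∀ σ ∈ F, coneD l σ ≤ coneD l Δ)
    (hmin : ∀ Δ₁ ⊂ Δ, coneD l Δ₁ < coneD l Δ)
    (hσ' : σ' ∈ starF F Δ) :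
    (σ' ∈ F ∧ ¬ Δ ⊆ σ') ∨
    ∃ σ ∈ F, coneD l σ = coneD l Δ ∧
      (coneD l σ' < coneD l σ ∨ (coneD l σ' = coneD l σ ∧ Om l σ' < Om l σ)) := by
  rw [mem_starF] at hσ'
  rcases hσ' with ⟨h1, h2⟩ | ⟨τ, hτF, hτ1, hτ2, rfl⟩
  · exact Or.inl ⟨h1, h2⟩
  · right
    refine ⟨τ ∪ Δ, hτ2, le_antisymm (hadm _ hτ2) (coneD_mono l Finset.subset_union_right), ?_⟩
    exact key l Δ τ hτ1 (hadm _ hτ2) hmin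

def Resolvable (S : Set (Finset (Fin n → ℤ))) : Prop :=
  ∃ (t : ℕ) (F : ℕ → Set (Finset (Fin n → ℤ))),
    F 0 = S ∧
    (∀ j < t, ∃ Δ ∈ F j,
      (∀ σ ∈ F j, coneD l σ ≤ coneD l Δ) ∧
      (∀ Δ₁ ⊂ Δ, coneD l Δ₁ < coneD l Δ) ∧
      F (j + 1) = starSubdivision (F j) Δ) ∧
    ∀ σ ∈ F t, coneD l σ = 0

lemma resolvable_of_zero {S : Set (Finset (Fin n → ℤ))} (h : ∀ σ ∈ S, coneD l σ = 0) :
    Resolvable l S :=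
  ⟨0, fun _ => S, rfl, fun j hj => absurd hj (Nat.not_lt_zero j), h⟩

lemma resolvable_step {S : Set (Finset (Fin n → ℤ))} {Δ : Finset (Fin n → ℤ)}
    (hΔ : Δ ∈ S) (hadm : ∀ σ ∈ S, coneD l σ ≤ coneD l Δ)
    (hmin : ∀ Δ₁ ⊂ Δ, coneD l Δ₁ < coneD l Δ)
    (h : Resolvable l (starSubdivision S Δ)) : Resolvable l S := by
  obtain ⟨t, F, hF0, hFstep, hFend⟩ := h
  refine ⟨t + 1, fun j => if j = 0 then S else F (j - 1), by simp, ?_, ?_⟩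
  · intro j hj
    match j with
    | 0 => exact ⟨Δ, by simpa using hΔ, by simpa using hadm, hmin, by simp [hF0]⟩
    | (k+1) =>
      obtain ⟨Δ', h1, h2, h3, h4⟩ := hFstep k (by omega)
      exact ⟨Δ', by simpa using h1, by simpa using h2, h3, by simpa using h4⟩
  · simpa using hFend

lemma main_induction : ∀ (D W c : ℕ) (F : Finset (Finset (Fin n → ℤ))),
    (∀ σ ∈ F, ∀ ρ ⊆ σ, ρ ∈ F) →
    (∀ σ ∈ F, coneD l σ ≤ (D : ℤ)) →
    (∀ σ ∈ F, coneD l σ = (D : ℤ) → Om l σ ≤ (W : ℤ)) →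
    ((F.filter (fun σ => coneD l σ = (D : ℤ) ∧ Om l σ = (W : ℤ))).card ≤ c) →
    Resolvable l ↑F := by
  classical
  intro D
  induction D using Nat.strong_induction_on with
  | _ D ihD =>
  intro W
  induction W using Nat.strong_induction_on with
  | _ W ihW =>
  intro c
  induction c using Nat.strong_induction_on with
  | _ c ihc =>
  intro F hcl hbD hbW hbc
  by_cases hD0 : D = 0
  · refine resolvable_of_zero l ?_
    intro σ hσ
    have h1 := hbD σ hσ
    have h2 := coneD_nonneg l σ
    subst hD0
    omega
  by_cases hst : ∀ σ ∈ F, coneD l σ ≤ (D : ℤ) - 1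
  · refine ihD (D - 1) (by omega) (F.sup (fun σ => (Om l σ).toNat)) F.card F hcl ?_ ?_
      (Finset.card_filter_le _ _)
    · intro σ hσ; have := hst σ hσ; push_cast; omega
    · intro σ hσ _
      have h1 : (Om l σ).toNat ≤ F.sup (fun σ => (Om l σ).toNat) := Finset.le_sup (f := fun σ => (Om l σ).toNat) hσ
      have h0 : 0 ≤ Om l σ := le_trans (P_nonneg l σ) (le_max_left _ _)
      omega
  push_neg at hst
  by_cases hWst : ∀ σ ∈ F, coneD l σ = (D : ℤ) → Om l σ ≤ (W : ℤ) - 1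
  · obtain ⟨σ₀, hσ₀F, hσ₀⟩ := hst
    have hσ₀D : coneD l σ₀ = (D : ℤ) := le_antisymm (hbD _ hσ₀F) (by omega)
    have hOm : Om l σ₀ ≤ (W : ℤ) - 1 := hWst _ hσ₀F hσ₀D
    have hOmge : coneD l σ₀ ≤ Om l σ₀ := by
      rw [coneD_eq]; unfold Om; omega
    refine ihW (W - 1) (by omega) F.card F hcl hbD ?_ (Finset.card_filter_le _ _)
    intro σ hσ hDσ
    have := hWst σ hσ hDσ
    push_cast
    omega
  push_neg at hWst
  obtain ⟨σs, hσsF, hσsD, hσsW'⟩ := hWst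
  have hσsW : Om l σs = (W : ℤ) := le_antisymm (hbW _ hσsF hσsD) (by omega)
  -- choose Δ minimal
  have hTne : (σs.powerset.filter (fun Δ => coneD l Δ = (D : ℤ))).Nonempty :=
    ⟨σs, Finset.mem_filter.mpr ⟨Finset.mem_powerset_self σs, hσsD⟩⟩
  obtain ⟨Δ, hΔT, hΔmin⟩ := Finset.exists_min_image _ Finset.card hTne
  obtain ⟨hΔσs', hΔD⟩ := Finset.mem_filter.mp hΔT
  have hΔσs : Δ ⊆ σs := Finset.mem_powerset.mp hΔσs'
  have hΔF : Δ ∈ F := hcl σs hσsF Δ hΔσs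
  have hadm : ∀ σ ∈ F, coneD l σ ≤ coneD l Δ := fun σ hσ => by
    rw [hΔD]; exact hbD σ hσ
  have hmin : ∀ Δ₁ ⊂ Δ, coneD l Δ₁ < coneD l Δ := by
    intro Δ₁ hΔ₁
    rcases eq_or_lt_of_le (coneD_mono l hΔ₁.subset) with heq | hlt
    · exfalso
      have hmem : Δ₁ ∈ σs.powerset.filter (fun Δ => coneD l Δ = (D : ℤ)) :=
        Finset.mem_filter.mpr ⟨Finset.mem_powerset.mpr (hΔ₁.subset.trans hΔσs),
          heq.trans hΔD⟩
      have h1 := hΔmin Δ₁ hmem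
      have h2 := Finset.card_lt_card hΔ₁
      omega
    · exact hlt
  -- properties of the subdivided fan
  have hbD' : ∀ σ' ∈ starF F Δ, coneD l σ' ≤ (D : ℤ) := by
    intro σ' hσ'
    rcases starF_step l hadm hmin hσ' with ⟨h1, _⟩ | ⟨σ, hσF, hσD, hlex⟩
    · exact hbD _ h1
    · have := hbD _ hσF
      rcases hlex with h | ⟨h, _⟩ <;> omega
  have hbW' : ∀ σ' ∈ starF F Δ, coneD l σ' = (D : ℤ) → Om l σ' ≤ (W : ℤ) := by
    intro σ' hσ' hD'
    rcases starF_step l hadm hmin hσ' with ⟨h1, _⟩ | ⟨σ, hσF, hσD, hlex⟩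
    · exact hbW _ h1 hD'
    · have h2 : coneD l σ = (D : ℤ) := by rw [hσD, hΔD]
      have h3 := hbW _ hσF h2
      rcases hlex with h | ⟨h, h4⟩ <;> omega
  have hlvl' : (starF F Δ).filter (fun σ => coneD l σ = (D : ℤ) ∧ Om l σ = (W : ℤ)) ⊆
      (F.filter (fun σ => coneD l σ = (D : ℤ) ∧ Om l σ = (W : ℤ))).erase σs := by
    intro σ' h
    obtain ⟨hσ'F', hσ'D, hσ'W⟩ := Finset.mem_filter.mp h
    rcases starF_step l hadm hmin hσ'F' with ⟨h1, h2⟩ | ⟨σ, hσF, hσD, hlex⟩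
    · refine Finset.mem_erase.mpr ⟨?_, Finset.mem_filter.mpr ⟨h1, hσ'D, hσ'W⟩⟩
      rintro rfl
      exact h2 hΔσs
    · exfalso
      have h2 : coneD l σ = (D : ℤ) := by rw [hσD, hΔD]
      have h3 := hbW _ hσF h2
      rcases hlex with h | ⟨h, h4⟩ <;> omega
  have hc1 : 1 ≤ c := by
    have : σs ∈ F.filter (fun σ => coneD l σ = (D : ℤ) ∧ Om l σ = (W : ℤ)) :=
      Finset.mem_filter.mpr ⟨hσsF, hσsD, hσsW⟩
    have := Finset.card_pos.mpr ⟨σs, this⟩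
    omega
  have hcard' : ((starF F Δ).filter
      (fun σ => coneD l σ = (D : ℤ) ∧ Om l σ = (W : ℤ))).card ≤ c - 1 := by
    have h1 := Finset.card_le_card hlvl'
    have h2 : σs ∈ F.filter (fun σ => coneD l σ = (D : ℤ) ∧ Om l σ = (W : ℤ)) :=
      Finset.mem_filter.mpr ⟨hσsF, hσsD, hσsW⟩
    have h3 := Finset.card_erase_of_mem h2
    omega
  have hres' : Resolvable l ↑(starF F Δ) :=
    ihc (c - 1) (by omega) (starF F Δ) (starF_closed hcl) hbD' hbW' hcard'
  rw [coe_starF hcl] at hres'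
  exact resolvable_step l (Finset.mem_coe.mpr hΔF) (fun σ hσ => hadm σ hσ) hmin hres'

end Reso


/-- Combinatorial resolution for toric hypersurfaces. For a regular fan `Σ₀`
in `ℤⁿ` (finite, closed under faces, all cones regular) and a linear function `λ`, there
is a finite sequence of star-subdivisions `Σ₀, Σ₁, …, Σ_t`, each at the barycentre of a
cone `Δ` which is admissible (`d_Δ = d(λ, Σ_j)`, i.e. `d_Δ` is maximal among all cones)
and minimal (every proper face `Δ₁ ⊊ Δ` has `d_{Δ₁} < d_Δ`), such that `d(λ, Σ_t) = 0`
(i.e. `d_σ = 0` for every cone `σ` of `Σ_t`). -/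
theorem toric_hypersurface_combinatorial_resolution
    (n : ℕ) (l : (Fin n → ℤ) →ₗ[ℤ] ℤ) (S0 : Set (Finset (Fin n → ℤ)))
    (hfin : S0.Finite)
    (hfaces : ∀ σ ∈ S0, ∀ τ ⊆ σ, τ ∈ S0)
    (hreg : ∀ σ ∈ S0, IsRegularCone σ) :
    ∃ (t : ℕ) (F : ℕ → Set (Finset (Fin n → ℤ))),
      F 0 = S0 ∧
      (∀ j < t, ∃ Δ ∈ F j,
        (∀ σ ∈ F j, coneD l σ ≤ coneD l Δ) ∧
        (∀ Δ₁ ⊂ Δ, coneD l Δ₁ < coneD l Δ) ∧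
        F (j + 1) = starSubdivision (F j) Δ) ∧
      ∀ σ ∈ F t, coneD l σ = 0 := by
  classical
  have hcoe : ↑hfin.toFinset = S0 := hfin.coe_toFinset
  set F : Finset (Finset (Fin n → ℤ)) := hfin.toFinset with hFdef
  have hcl : ∀ σ ∈ F, ∀ ρ ⊆ σ, ρ ∈ F := by
    intro σ hσ ρ hρ
    rw [hFdef, Set.Finite.mem_toFinset] at hσ ⊢
    exact hfaces σ hσ ρ hρ
  have hres : Reso.Resolvable l ↑F := by
    refine Reso.main_induction l (F.sup fun σ => (coneD l σ).toNat)
      (F.sup fun σ => (Reso.Om l σ).toNat) F.card F hcl ?_ ?_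
      (Finset.card_filter_le _ _)
    · intro σ hσ
      have h0 := Reso.coneD_nonneg l σ
      have h1 : (coneD l σ).toNat ≤ F.sup fun σ => (coneD l σ).toNat :=
        Finset.le_sup (f := fun σ => (coneD l σ).toNat) hσ
      omega
    · intro σ hσ _
      have h0 : 0 ≤ Reso.Om l σ := le_trans (Reso.P_nonneg l σ) (le_max_left _ _)
      have h1 : (Reso.Om l σ).toNat ≤ F.sup fun σ => (Reso.Om l σ).toNat :=
        Finset.le_sup (f := fun σ => (Reso.Om l σ).toNat) hσ
      omega
  rw [hFdef, hcoe] at hres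
  exact hres
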